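/- Fix $\phi_1 \ne \phi_2$ in $[0,2\pi)$ and let $f \in H^{1/2}((0,2\pi))$. If both integrals $\int_0^{2\pi} \frac{dt}{t^2} \int_0^t |e^{i\phi_j} f(x+2\pi-t) - f(x)|^2\,dx$ ($j = 1,2$) are finite, then $\int_0^{2\pi}\big(\frac{|f(x)|^2}{x} + \frac{|f(x)|^2}{2\pi - x}\big)dx < \infty$, i.e., $f \in H^{1/2}_{0,0}((0,2\pi))$. -/

import Mathlib

open MeasureTheory Set
open scoped ENNReal NNReal

open Function
lemma lint_inv_sq {a b : ℝ} (ha : 0 < a) (hab : a < b) :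
    ∫⁻ t in Ioo a b, ENNReal.ofReal ((t ^ 2)⁻¹) = ENNReal.ofReal (a⁻¹ - b⁻¹) := by
  rw [setLIntegral_congr Ioo_ae_eq_Ioc]
  have hcont : ContinuousOn (fun t : ℝ => (t ^ 2)⁻¹) (Icc a b) := by
    apply ContinuousOn.inv₀ (by fun_prop)
    intro t ht
    have : 0 < t := lt_of_lt_of_le ha ht.1
    positivity
  have hint : IntegrableOn (fun t : ℝ => (t ^ 2)⁻¹) (Ioc a b) :=
    (hcont.integrableOn_Icc).mono_set Ioc_subset_Icc_self
  rw [← ofReal_integral_eq_lintegral_ofReal hint]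
  · congr 1
    rw [← intervalIntegral.integral_of_le hab.le]
    have h0 : (0:ℝ) ∉ uIcc a b := by
      rw [uIcc_of_le hab.le]
      intro h
      exact absurd h.1 (by linarith)
    have := integral_zpow (a := a) (b := b) (n := -2) (Or.inr ⟨by norm_num, h0⟩)
    have heq : ∀ x : ℝ, x ^ (-2 : ℤ) = (x ^ 2)⁻¹ := by
      intro x; rw [zpow_neg]; norm_cast
    rw [show (fun x : ℝ => (x ^ 2)⁻¹) = fun x : ℝ => x ^ (-2 : ℤ) from funext fun x => (heq x).symm]
    rw [this]
    norm_num [zpow_neg]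
    ring
  · filter_upwards [ae_restrict_mem measurableSet_Ioc] with t ht
    have : 0 < t := ha.trans ht.1
    positivity

lemma lint_translate (g : ℝ → ℝ≥0∞) (a t : ℝ) :
    ∫⁻ x in Ioo 0 t, g (x + a) = ∫⁻ y in Ioo a (t + a), g y := by
  have hmp : MeasurePreserving (fun x : ℝ => x + a) volume volume :=
    measurePreserving_add_right volume a
  have hemb : MeasurableEmbedding (fun x : ℝ => x + a) :=
    (Homeomorph.addRight a).measurableEmbedding
  have hpre : (fun x : ℝ => x + a) ⁻¹' Ioo a (t + a) = Ioo 0 t := by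
    ext x
    simp only [mem_preimage, mem_Ioo]
    constructor <;> intro h <;> exact ⟨by linarith [h.1], by linarith [h.2]⟩
  rw [← hpre, hmp.setLIntegral_comp_preimage_emb hemb]

lemma lint_swap (S : Set (ℝ × ℝ)) (hS : MeasurableSet S) (H : ℝ × ℝ → ℝ≥0∞) (hH : Measurable H) :
    ∫⁻ t, ∫⁻ x in {x | (t, x) ∈ S}, H (t, x) = ∫⁻ x, ∫⁻ t in {t | (t, x) ∈ S}, H (t, x) := by
  have key : ∀ (t x : ℝ), S.indicator H (t, x) =
      ({x | (t, x) ∈ S} : Set ℝ).indicator (fun x => H (t, x)) x := by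
    intro t x
    by_cases h : (t, x) ∈ S <;> simp [Set.indicator_apply, h]
  have key2 : ∀ (t x : ℝ), S.indicator H (t, x) =
      ({t | (t, x) ∈ S} : Set ℝ).indicator (fun t => H (t, x)) t := by
    intro t x
    by_cases h : (t, x) ∈ S <;> simp [Set.indicator_apply, h]
  have hsec1 : ∀ t : ℝ, MeasurableSet {x | (t, x) ∈ S} := fun t => measurable_prodMk_left hS
  have hsec2 : ∀ x : ℝ, MeasurableSet {t | (t, x) ∈ S} := fun x => measurable_prodMk_right hS
  calc ∫⁻ t, ∫⁻ x in {x | (t, x) ∈ S}, H (t, x)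
      = ∫⁻ t, ∫⁻ x, S.indicator H (t, x) := by
        apply lintegral_congr; intro t
        rw [← lintegral_indicator (hsec1 t)]
        apply lintegral_congr; intro x; exact (key t x).symm
    _ = ∫⁻ x, ∫⁻ t, S.indicator H (t, x) := by
        apply lintegral_lintegral_swap
        exact ((hH.indicator hS).comp (measurable_fst.prodMk measurable_snd)).aemeasurable
    _ = ∫⁻ x, ∫⁻ t in {t | (t, x) ∈ S}, H (t, x) := by
        apply lintegral_congr; intro x
        rw [← lintegral_indicator (hsec2 x)]
        apply lintegral_congr; intro t; exact key2 t x

lemma meas_G (K : ℝ × ℝ → ℝ≥0∞) (hK : Measurable K) :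
    Measurable (fun t => ∫⁻ x in Ioo 0 t, K (t, x)) := by
  have hS₀ : MeasurableSet {p : ℝ × ℝ | p.2 ∈ Ioo 0 p.1} :=
    (measurableSet_lt measurable_const measurable_snd).inter
      (measurableSet_lt measurable_snd measurable_fst)
  have heq : (fun t => ∫⁻ x in Ioo 0 t, K (t, x)) =
      fun t => ∫⁻ x, ({p : ℝ × ℝ | p.2 ∈ Ioo 0 p.1}).indicator K (t, x) := by
    funext t
    rw [← lintegral_indicator measurableSet_Ioo]
    apply lintegral_congr; intro x
    by_cases h : x ∈ Ioo 0 t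
    · have h' : 0 < x ∧ x < t := h
      simp [Set.indicator_apply, h', h]
    · have h' : ¬(0 < x ∧ x < t) := fun hc => h hc
      simp [Set.indicator_apply, h', h]
  rw [heq]
  exact Measurable.lintegral_prod_right
    ((hK.indicator hS₀).comp (measurable_fst.prodMk measurable_snd))

lemma pointwise_bound (e₁ e₂ : ℂ) (h₁ : ‖e₁‖ = 1) (hne : e₁ ≠ e₂) :
    ∃ C : ℝ, 0 ≤ C ∧ ∀ u v : ℂ, ‖v‖ ^ 2 + ‖u‖ ^ 2 ≤ C * (‖e₁ * u - v‖ ^ 2 + ‖e₂ * u - v‖ ^ 2) := by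
  have hr : 0 < ‖e₁ - e₂‖ := norm_pos_iff.mpr (sub_ne_zero.mpr hne)
  set r := ‖e₁ - e₂‖ with hrdef
  refine ⟨(6 + 2 * r ^ 2) / r ^ 2, by positivity, fun u v => ?_⟩
  set w₁ := e₁ * u - v with hw₁
  set w₂ := e₂ * u - v with hw₂
  have hun : r * ‖u‖ = ‖w₁ - w₂‖ := by
    rw [← norm_mul]; congr 1; rw [hw₁, hw₂]; ring
  have h1 : r * ‖u‖ ≤ ‖w₁‖ + ‖w₂‖ := hun ▸ norm_sub_le _ _
  have h2 : ‖v‖ ≤ ‖u‖ + ‖w₁‖ := by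
    calc ‖v‖ = ‖e₁ * u - w₁‖ := by rw [hw₁]; congr 1; ring
    _ ≤ ‖e₁ * u‖ + ‖w₁‖ := norm_sub_le _ _
    _ = ‖u‖ + ‖w₁‖ := by rw [norm_mul, h₁, one_mul]
  have key : r ^ 2 * (‖v‖ ^ 2 + ‖u‖ ^ 2) ≤ (6 + 2 * r ^ 2) * (‖w₁‖ ^ 2 + ‖w₂‖ ^ 2) := by
    nlinarith [norm_nonneg u, norm_nonneg v, norm_nonneg w₁, norm_nonneg w₂,
      sq_nonneg (‖w₁‖ - ‖w₂‖), sq_nonneg (‖u‖ - ‖w₁‖), sq_nonneg (r * ‖u‖),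
      mul_self_le_mul_self (by positivity : (0:ℝ) ≤ r * ‖u‖) h1,
      mul_self_le_mul_self (norm_nonneg v) h2, sq_nonneg (r * ‖v‖ - ‖w₁‖),
      sq_nonneg (r * ‖u‖ - ‖w₁‖ - ‖w₂‖)]
  rw [div_mul_eq_mul_div, le_div_iff₀ (by positivity)]
  linarith [key]

lemma exp_ne (φ₁ φ₂ : ℝ) (hφ₁ : φ₁ ∈ Ico 0 (2 * Real.pi)) (hφ₂ : φ₂ ∈ Ico 0 (2 * Real.pi))
    (hne : φ₁ ≠ φ₂) : Complex.exp (Complex.I * φ₁) ≠ Complex.exp (Complex.I * φ₂) := by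
  intro h
  rw [Complex.exp_eq_exp_iff_exists_int] at h
  obtain ⟨n, hn⟩ := h
  have him := congrArg Complex.im hn
  simp [Complex.mul_im, Complex.add_im] at him
  have hpi := Real.pi_pos
  have hb1 : (-1:ℝ) < n := by nlinarith [hφ₁.1, hφ₁.2, hφ₂.1, hφ₂.2]
  have hb2 : (n:ℝ) < 1 := by nlinarith [hφ₁.1, hφ₁.2, hφ₂.1, hφ₂.2]
  have hn0 : n = 0 := by
    have h1 : (-1:ℤ) < n := by exact_mod_cast hb1
    have h2 : n < 1 := by exact_mod_cast hb2
    omega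
  rw [hn0] at him
  simp at him
  exact hne him


/-- Fix `φ₁ ≠ φ₂` in `[0,2π)` and let `f ∈ H^{1/2}((0,2π))`.  If both
integrals `∫₀^{2π} t^{-2} ∫₀^t |e^{iφ_j} f(x+2π-t) - f(x)|² dx dt` (`j = 1,2`) are finite,
then `∫₀^{2π} (|f(x)|²/x + |f(x)|²/(2π-x)) dx < ∞`, i.e. `f ∈ H^{1/2}_{0,0}((0,2π))`. -/
theorem stmt_19 (φ₁ φ₂ : ℝ) (hφ₁ : φ₁ ∈ Ico 0 (2 * Real.pi)) (hφ₂ : φ₂ ∈ Ico 0 (2 * Real.pi))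
    (hne : φ₁ ≠ φ₂) (f : ℝ → ℂ) (hmeas : Measurable f)
    -- `f ∈ H^{1/2}((0,2π))`:
    (hL2 : MemLp f 2 (volume.restrict (Ioo 0 (2 * Real.pi))))
    (hGag : (∫⁻ x in Ioo 0 (2 * Real.pi), ∫⁻ y in Ioo 0 (2 * Real.pi),
        ((‖f x - f y‖₊ : ℝ≥0∞) ^ 2) / ENNReal.ofReal (|x - y| ^ 2)) ≠ ⊤)
    (h1 : (∫⁻ t in Ioo 0 (2 * Real.pi), (∫⁻ x in Ioo 0 t,
        ((‖Complex.exp (Complex.I * φ₁) * f (x + 2 * Real.pi - t) - f x‖₊ : ℝ≥0∞) ^ 2))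
          / ENNReal.ofReal (t ^ 2)) ≠ ⊤)
    (h2 : (∫⁻ t in Ioo 0 (2 * Real.pi), (∫⁻ x in Ioo 0 t,
        ((‖Complex.exp (Complex.I * φ₂) * f (x + 2 * Real.pi - t) - f x‖₊ : ℝ≥0∞) ^ 2))
          / ENNReal.ofReal (t ^ 2)) ≠ ⊤) :
    (∫⁻ x in Ioo 0 (2 * Real.pi),
        ((‖f x‖₊ : ℝ≥0∞) ^ 2) *
          (ENNReal.ofReal (1 / x) + ENNReal.ofReal (1 / (2 * Real.pi - x)))) ≠ ⊤ := by
  have hpi := Real.pi_pos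
  have hene := exp_ne φ₁ φ₂ hφ₁ hφ₂ hne
  set c := 2 * Real.pi with hc_def
  have hc : 0 < c := by positivity
  set e₁ := Complex.exp (Complex.I * (φ₁ : ℂ)) with he₁
  set e₂ := Complex.exp (Complex.I * (φ₂ : ℂ)) with he₂
  have he₁n : ‖e₁‖ = 1 := by
    rw [he₁, Complex.norm_exp]
    simp
  obtain ⟨C, hC0, hCb⟩ := pointwise_bound e₁ e₂ he₁n hene
  set F : ℝ → ℝ≥0∞ := fun x => (‖f x‖₊ : ℝ≥0∞) ^ 2 with hF_def
  have hF : Measurable F := (hmeas.nnnorm.coe_nnreal_ennreal).pow_const 2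
  have hFne : ∀ x, F x ≠ ⊤ := fun x => ENNReal.pow_ne_top ENNReal.coe_ne_top
  have conv1 : ∀ z : ℂ, ENNReal.ofReal (‖z‖ ^ 2) = (‖z‖₊ : ℝ≥0∞) ^ 2 := fun z => by
    rw [ENNReal.ofReal_pow (norm_nonneg _), ofReal_norm, enorm_eq_nnnorm]
  -- pointwise ENNReal bound
  have hpt : ∀ t x : ℝ, F x + F (x + c - t) ≤ ENNReal.ofReal C *
      ((‖e₁ * f (x + c - t) - f x‖₊ : ℝ≥0∞) ^ 2 + (‖e₂ * f (x + c - t) - f x‖₊ : ℝ≥0∞) ^ 2) := by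
    intro t x
    have hreal := hCb (f (x + c - t)) (f x)
    calc F x + F (x + c - t)
        = ENNReal.ofReal (‖f x‖ ^ 2 + ‖f (x + c - t)‖ ^ 2) := by
          rw [ENNReal.ofReal_add (by positivity) (by positivity), conv1, conv1]
      _ ≤ ENNReal.ofReal (C * (‖e₁ * f (x + c - t) - f x‖ ^ 2 + ‖e₂ * f (x + c - t) - f x‖ ^ 2)) :=
          ENNReal.ofReal_le_ofReal hreal
      _ = _ := by
          rw [ENNReal.ofReal_mul hC0, ENNReal.ofReal_add (by positivity) (by positivity),
            conv1, conv1]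
  -- measurable kernels
  have hw₁m : Measurable (fun p : ℝ × ℝ => (‖e₁ * f (p.2 + c - p.1) - f p.2‖₊ : ℝ≥0∞) ^ 2) := by
    apply Measurable.pow_const
    apply Measurable.coe_nnreal_ennreal
    apply Measurable.nnnorm
    exact ((hmeas.comp ((measurable_snd.add_const c).sub measurable_fst)).const_mul e₁).sub
      (hmeas.comp measurable_snd)
  have hw₂m : Measurable (fun p : ℝ × ℝ => (‖e₂ * f (p.2 + c - p.1) - f p.2‖₊ : ℝ≥0∞) ^ 2) := by
    apply Measurable.pow_const
    apply Measurable.coe_nnreal_ennreal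
    apply Measurable.nnnorm
    exact ((hmeas.comp ((measurable_snd.add_const c).sub measurable_fst)).const_mul e₂).sub
      (hmeas.comp measurable_snd)
  have hG₁ : Measurable (fun t => ∫⁻ x in Ioo 0 t,
      (‖e₁ * f (x + c - t) - f x‖₊ : ℝ≥0∞) ^ 2) := meas_G _ hw₁m
  have hG₂ : Measurable (fun t => ∫⁻ x in Ioo 0 t,
      (‖e₂ * f (x + c - t) - f x‖₊ : ℝ≥0∞) ^ 2) := meas_G _ hw₂m
  have hinvm : Measurable (fun t : ℝ => ENNReal.ofReal ((t ^ 2)⁻¹)) :=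
    ENNReal.measurable_ofReal.comp ((measurable_id.pow_const 2).inv)
  have hdiv : ∀ (a : ℝ≥0∞) (t : ℝ), 0 < t →
      a / ENNReal.ofReal (t ^ 2) = a * ENNReal.ofReal ((t ^ 2)⁻¹) := by
    intro a t ht
    rw [ENNReal.ofReal_inv_of_pos (by positivity), div_eq_mul_inv]
  -- finite: I₁, I₂
  have hI₁ : (∫⁻ t in Ioo 0 c, (∫⁻ x in Ioo 0 t,
      (‖e₁ * f (x + c - t) - f x‖₊ : ℝ≥0∞) ^ 2) * ENNReal.ofReal ((t ^ 2)⁻¹)) ≠ ⊤ := by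
    have heq : (∫⁻ t in Ioo 0 c, (∫⁻ x in Ioo 0 t,
        (‖e₁ * f (x + c - t) - f x‖₊ : ℝ≥0∞) ^ 2) * ENNReal.ofReal ((t ^ 2)⁻¹)) =
        ∫⁻ t in Ioo 0 c, (∫⁻ x in Ioo 0 t,
        (‖e₁ * f (x + c - t) - f x‖₊ : ℝ≥0∞) ^ 2) / ENNReal.ofReal (t ^ 2) :=
      setLIntegral_congr_fun measurableSet_Ioo (fun t ht => (hdiv _ t ht.1).symm)
    rw [heq]; exact h1
  have hI₂ : (∫⁻ t in Ioo 0 c, (∫⁻ x in Ioo 0 t,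
      (‖e₂ * f (x + c - t) - f x‖₊ : ℝ≥0∞) ^ 2) * ENNReal.ofReal ((t ^ 2)⁻¹)) ≠ ⊤ := by
    have heq : (∫⁻ t in Ioo 0 c, (∫⁻ x in Ioo 0 t,
        (‖e₂ * f (x + c - t) - f x‖₊ : ℝ≥0∞) ^ 2) * ENNReal.ofReal ((t ^ 2)⁻¹)) =
        ∫⁻ t in Ioo 0 c, (∫⁻ x in Ioo 0 t,
        (‖e₂ * f (x + c - t) - f x‖₊ : ℝ≥0∞) ^ 2) / ENNReal.ofReal (t ^ 2) :=
      setLIntegral_congr_fun measurableSet_Ioo (fun t ht => (hdiv _ t ht.1).symm)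
    rw [heq]; exact h2
  -- J finite
  have hJle : (∫⁻ t in Ioo 0 c,
      (∫⁻ x in Ioo 0 t, (F x + F (x + c - t))) * ENNReal.ofReal ((t ^ 2)⁻¹))
      ≤ ENNReal.ofReal C *
        ((∫⁻ t in Ioo 0 c, (∫⁻ x in Ioo 0 t,
          (‖e₁ * f (x + c - t) - f x‖₊ : ℝ≥0∞) ^ 2) * ENNReal.ofReal ((t ^ 2)⁻¹)) +
         (∫⁻ t in Ioo 0 c, (∫⁻ x in Ioo 0 t,
          (‖e₂ * f (x + c - t) - f x‖₊ : ℝ≥0∞) ^ 2) * ENNReal.ofReal ((t ^ 2)⁻¹))) := by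
    have step1 : ∀ t : ℝ, (∫⁻ x in Ioo 0 t, (F x + F (x + c - t))) ≤
        ENNReal.ofReal C * ((∫⁻ x in Ioo 0 t, (‖e₁ * f (x + c - t) - f x‖₊ : ℝ≥0∞) ^ 2) +
          (∫⁻ x in Ioo 0 t, (‖e₂ * f (x + c - t) - f x‖₊ : ℝ≥0∞) ^ 2)) := by
      intro t
      calc (∫⁻ x in Ioo 0 t, (F x + F (x + c - t)))
          ≤ ∫⁻ x in Ioo 0 t, ENNReal.ofReal C *
              ((‖e₁ * f (x + c - t) - f x‖₊ : ℝ≥0∞) ^ 2 +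
               (‖e₂ * f (x + c - t) - f x‖₊ : ℝ≥0∞) ^ 2) := lintegral_mono fun x => hpt t x
        _ = ENNReal.ofReal C * ∫⁻ x in Ioo 0 t,
              ((‖e₁ * f (x + c - t) - f x‖₊ : ℝ≥0∞) ^ 2 +
               (‖e₂ * f (x + c - t) - f x‖₊ : ℝ≥0∞) ^ 2) :=
            lintegral_const_mul' _ _ ENNReal.ofReal_ne_top
        _ = _ := by
            congr 1
            apply lintegral_add_left
            exact (((hmeas.comp ((measurable_id.add_const c).sub_const t)).const_mul e₁).sub
              hmeas).nnnorm.coe_nnreal_ennreal.pow_const 2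
    calc (∫⁻ t in Ioo 0 c, (∫⁻ x in Ioo 0 t, (F x + F (x + c - t))) * ENNReal.ofReal ((t ^ 2)⁻¹))
        ≤ ∫⁻ t in Ioo 0 c, (ENNReal.ofReal C *
            ((∫⁻ x in Ioo 0 t, (‖e₁ * f (x + c - t) - f x‖₊ : ℝ≥0∞) ^ 2) +
             (∫⁻ x in Ioo 0 t, (‖e₂ * f (x + c - t) - f x‖₊ : ℝ≥0∞) ^ 2))) *
            ENNReal.ofReal ((t ^ 2)⁻¹) :=
          lintegral_mono fun t => mul_le_mul_left (step1 t) _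
      _ = ∫⁻ t in Ioo 0 c, ENNReal.ofReal C *
            ((∫⁻ x in Ioo 0 t, (‖e₁ * f (x + c - t) - f x‖₊ : ℝ≥0∞) ^ 2) *
              ENNReal.ofReal ((t ^ 2)⁻¹) +
             (∫⁻ x in Ioo 0 t, (‖e₂ * f (x + c - t) - f x‖₊ : ℝ≥0∞) ^ 2) *
              ENNReal.ofReal ((t ^ 2)⁻¹)) := by
          apply lintegral_congr; intro t; ring
      _ = ENNReal.ofReal C * ∫⁻ t in Ioo 0 c,
            ((∫⁻ x in Ioo 0 t, (‖e₁ * f (x + c - t) - f x‖₊ : ℝ≥0∞) ^ 2) *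
              ENNReal.ofReal ((t ^ 2)⁻¹) +
             (∫⁻ x in Ioo 0 t, (‖e₂ * f (x + c - t) - f x‖₊ : ℝ≥0∞) ^ 2) *
              ENNReal.ofReal ((t ^ 2)⁻¹)) := lintegral_const_mul' _ _ ENNReal.ofReal_ne_top
      _ = _ := by
          congr 1
          exact lintegral_add_left (hG₁.mul hinvm) _
  have hJ : (∫⁻ t in Ioo 0 c,
      (∫⁻ x in Ioo 0 t, (F x + F (x + c - t))) * ENNReal.ofReal ((t ^ 2)⁻¹)) ≠ ⊤ :=
    ne_top_of_le_ne_top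
      (ENNReal.mul_ne_top ENNReal.ofReal_ne_top (ENNReal.add_ne_top.mpr ⟨hI₁, hI₂⟩)) hJle
  -- split J into J₁ + J₂
  have hJsplit : (∫⁻ t in Ioo 0 c,
      (∫⁻ x in Ioo 0 t, (F x + F (x + c - t))) * ENNReal.ofReal ((t ^ 2)⁻¹)) =
      (∫⁻ t in Ioo 0 c, (∫⁻ x in Ioo 0 t, F x) * ENNReal.ofReal ((t ^ 2)⁻¹)) +
      (∫⁻ t in Ioo 0 c, (∫⁻ x in Ioo 0 t, F (x + c - t)) * ENNReal.ofReal ((t ^ 2)⁻¹)) := by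
    have hptw : ∀ t : ℝ, (∫⁻ x in Ioo 0 t, (F x + F (x + c - t))) * ENNReal.ofReal ((t ^ 2)⁻¹) =
        (∫⁻ x in Ioo 0 t, F x) * ENNReal.ofReal ((t ^ 2)⁻¹) +
        (∫⁻ x in Ioo 0 t, F (x + c - t)) * ENNReal.ofReal ((t ^ 2)⁻¹) := by
      intro t
      rw [lintegral_add_left hF, add_mul]
    rw [lintegral_congr hptw]
    apply lintegral_add_left
    exact ((meas_G (fun p => F p.2) (hF.comp measurable_snd)).mul hinvm)
  have hJ₁ : (∫⁻ t in Ioo 0 c, (∫⁻ x in Ioo 0 t, F x) * ENNReal.ofReal ((t ^ 2)⁻¹)) ≠ ⊤ := by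
    intro hcon
    rw [hJsplit, hcon] at hJ
    simp at hJ
  have hJ₂ : (∫⁻ t in Ioo 0 c, (∫⁻ x in Ioo 0 t, F (x + c - t)) * ENNReal.ofReal ((t ^ 2)⁻¹)) ≠ ⊤ := by
    intro hcon
    rw [hJsplit, hcon] at hJ
    simp at hJ
  -- Tonelli for J₁
  have hE₁ : (∫⁻ x in Ioo 0 c, F x * ENNReal.ofReal (x⁻¹ - c⁻¹)) ≠ ⊤ := by
    have hS₁ : MeasurableSet {p : ℝ × ℝ | p.1 ∈ Ioo 0 c ∧ p.2 ∈ Ioo 0 p.1} := by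
      apply MeasurableSet.inter
      · exact ((measurableSet_lt measurable_const measurable_fst).inter
          (measurableSet_lt measurable_fst measurable_const))
      · exact ((measurableSet_lt measurable_const measurable_snd).inter
          (measurableSet_lt measurable_snd measurable_fst))
    have hH₁ : Measurable (fun p : ℝ × ℝ => F p.2 * ENNReal.ofReal ((p.1 ^ 2)⁻¹)) :=
      (hF.comp measurable_snd).mul (hinvm.comp measurable_fst)
    have hchain : (∫⁻ t in Ioo 0 c, (∫⁻ x in Ioo 0 t, F x) * ENNReal.ofReal ((t ^ 2)⁻¹)) =
        ∫⁻ x in Ioo 0 c, F x * ENNReal.ofReal (x⁻¹ - c⁻¹) := by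
      calc (∫⁻ t in Ioo 0 c, (∫⁻ x in Ioo 0 t, F x) * ENNReal.ofReal ((t ^ 2)⁻¹))
          = ∫⁻ t in Ioo 0 c, ∫⁻ x in Ioo 0 t, F x * ENNReal.ofReal ((t ^ 2)⁻¹) := by
            apply setLIntegral_congr_fun measurableSet_Ioo
            exact fun t ht => (lintegral_mul_const' _ _ ENNReal.ofReal_ne_top).symm
        _ = ∫⁻ t, ∫⁻ x in {x | (t, x) ∈ {p : ℝ × ℝ | p.1 ∈ Ioo 0 c ∧ p.2 ∈ Ioo 0 p.1}},
              F x * ENNReal.ofReal ((t ^ 2)⁻¹) := by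
            rw [← lintegral_indicator measurableSet_Ioo]
            apply lintegral_congr; intro t
            by_cases ht : t ∈ Ioo 0 c
            · rw [indicator_of_mem ht]
              have hsec : {x | (t, x) ∈ {p : ℝ × ℝ | p.1 ∈ Ioo 0 c ∧ p.2 ∈ Ioo 0 p.1}} =
                  Ioo 0 t := by
                ext x; simp only [mem_setOf_eq, mem_Ioo]
                exact ⟨fun h => h.2, fun h => ⟨⟨ht.1, ht.2⟩, h⟩⟩
              rw [hsec]
            · rw [indicator_of_notMem ht]
              have hsec : {x | (t, x) ∈ {p : ℝ × ℝ | p.1 ∈ Ioo 0 c ∧ p.2 ∈ Ioo 0 p.1}} =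
                  (∅ : Set ℝ) := by
                ext x; simp only [mem_setOf_eq, mem_empty_iff_false, iff_false]
                intro h; exact ht h.1
              rw [hsec]; simp
        _ = ∫⁻ x, ∫⁻ t in {t | (t, x) ∈ {p : ℝ × ℝ | p.1 ∈ Ioo 0 c ∧ p.2 ∈ Ioo 0 p.1}},
              F x * ENNReal.ofReal ((t ^ 2)⁻¹) :=
            lint_swap _ hS₁ _ hH₁
        _ = ∫⁻ x in Ioo 0 c, F x * ENNReal.ofReal (x⁻¹ - c⁻¹) := by
            rw [← lintegral_indicator measurableSet_Ioo]
            apply lintegral_congr; intro x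
            by_cases hx : x ∈ Ioo 0 c
            · rw [indicator_of_mem hx]
              have hsec : {t | (t, x) ∈ {p : ℝ × ℝ | p.1 ∈ Ioo 0 c ∧ p.2 ∈ Ioo 0 p.1}} =
                  Ioo x c := by
                ext t; simp only [mem_setOf_eq, mem_Ioo]
                constructor
                · rintro ⟨⟨ht0, htc⟩, ⟨hx0, hxt⟩⟩; exact ⟨hxt, htc⟩
                · rintro ⟨hxt, htc⟩; exact ⟨⟨hx.1.trans hxt, htc⟩, ⟨hx.1, hxt⟩⟩
              rw [hsec, lintegral_const_mul' (F x) _ (hFne x), lint_inv_sq hx.1 hx.2]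
            · rw [indicator_of_notMem hx]
              have hsec : {t | (t, x) ∈ {p : ℝ × ℝ | p.1 ∈ Ioo 0 c ∧ p.2 ∈ Ioo 0 p.1}} =
                  (∅ : Set ℝ) := by
                ext t; simp only [mem_setOf_eq, mem_empty_iff_false, iff_false]
                rintro ⟨⟨ht0, htc⟩, ⟨hx0, hxt⟩⟩
                exact hx ⟨hx0, hxt.trans htc⟩
              rw [hsec]; simp
    rw [← hchain]; exact hJ₁
  -- Tonelli for J₂
  have hE₂ : (∫⁻ x in Ioo 0 c, F x * ENNReal.ofReal ((c - x)⁻¹ - c⁻¹)) ≠ ⊤ := by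
    have hS₂ : MeasurableSet {p : ℝ × ℝ | p.1 ∈ Ioo 0 c ∧ p.2 ∈ Ioo (c - p.1) c} := by
      apply MeasurableSet.inter
      · exact ((measurableSet_lt measurable_const measurable_fst).inter
          (measurableSet_lt measurable_fst measurable_const))
      · exact ((measurableSet_lt (measurable_const.sub measurable_fst) measurable_snd).inter
          (measurableSet_lt measurable_snd measurable_const))
    have hH₂ : Measurable (fun p : ℝ × ℝ => F p.2 * ENNReal.ofReal ((p.1 ^ 2)⁻¹)) :=
      (hF.comp measurable_snd).mul (hinvm.comp measurable_fst)
    have hchain : (∫⁻ t in Ioo 0 c, (∫⁻ x in Ioo 0 t, F (x + c - t)) * ENNReal.ofReal ((t ^ 2)⁻¹)) =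
        ∫⁻ x in Ioo 0 c, F x * ENNReal.ofReal ((c - x)⁻¹ - c⁻¹) := by
      calc (∫⁻ t in Ioo 0 c, (∫⁻ x in Ioo 0 t, F (x + c - t)) * ENNReal.ofReal ((t ^ 2)⁻¹))
          = ∫⁻ t in Ioo 0 c, ∫⁻ y in Ioo (c - t) c, F y * ENNReal.ofReal ((t ^ 2)⁻¹) := by
            apply setLIntegral_congr_fun measurableSet_Ioo
            intro t ht
            have htr : (∫⁻ x in Ioo 0 t, F (x + c - t)) = ∫⁻ y in Ioo (c - t) c, F y := by
              have hre : (∫⁻ x in Ioo 0 t, F (x + c - t)) =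
                  ∫⁻ x in Ioo 0 t, F (x + (c - t)) := by
                apply lintegral_congr; intro x
                rw [add_sub_assoc]
              rw [hre, lint_translate F (c - t) t, show t + (c - t) = c by ring]
            dsimp only; rw [htr, lintegral_mul_const' _ _ ENNReal.ofReal_ne_top]
        _ = ∫⁻ t, ∫⁻ x in {x | (t, x) ∈ {p : ℝ × ℝ | p.1 ∈ Ioo 0 c ∧ p.2 ∈ Ioo (c - p.1) c}},
              F x * ENNReal.ofReal ((t ^ 2)⁻¹) := by
            rw [← lintegral_indicator measurableSet_Ioo]
            apply lintegral_congr; intro t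
            by_cases ht : t ∈ Ioo 0 c
            · rw [indicator_of_mem ht]
              have hsec : {x | (t, x) ∈ {p : ℝ × ℝ | p.1 ∈ Ioo 0 c ∧ p.2 ∈ Ioo (c - p.1) c}} =
                  Ioo (c - t) c := by
                ext x; simp only [mem_setOf_eq, mem_Ioo]
                exact ⟨fun h => h.2, fun h => ⟨⟨ht.1, ht.2⟩, h⟩⟩
              rw [hsec]
            · rw [indicator_of_notMem ht]
              have hsec : {x | (t, x) ∈ {p : ℝ × ℝ | p.1 ∈ Ioo 0 c ∧ p.2 ∈ Ioo (c - p.1) c}} =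
                  (∅ : Set ℝ) := by
                ext x; simp only [mem_setOf_eq, mem_empty_iff_false, iff_false]
                intro h; exact ht h.1
              rw [hsec]; simp
        _ = ∫⁻ x, ∫⁻ t in {t | (t, x) ∈ {p : ℝ × ℝ | p.1 ∈ Ioo 0 c ∧ p.2 ∈ Ioo (c - p.1) c}},
              F x * ENNReal.ofReal ((t ^ 2)⁻¹) :=
            lint_swap _ hS₂ _ hH₂
        _ = ∫⁻ x in Ioo 0 c, F x * ENNReal.ofReal ((c - x)⁻¹ - c⁻¹) := by
            rw [← lintegral_indicator measurableSet_Ioo]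
            apply lintegral_congr; intro x
            by_cases hx : x ∈ Ioo 0 c
            · rw [indicator_of_mem hx]
              have hsec : {t | (t, x) ∈ {p : ℝ × ℝ | p.1 ∈ Ioo 0 c ∧ p.2 ∈ Ioo (c - p.1) c}} =
                  Ioo (c - x) c := by
                ext t; simp only [mem_setOf_eq, mem_Ioo]
                constructor
                · rintro ⟨⟨ht0, htc⟩, ⟨hct, hxc⟩⟩
                  exact ⟨by linarith, htc⟩
                · rintro ⟨hcxt, htc⟩
                  have h0t : 0 < t := lt_of_le_of_lt (by linarith [hx.2] : (0:ℝ) ≤ c - x) hcxt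
                  exact ⟨⟨h0t, htc⟩, ⟨by linarith, hx.2⟩⟩
              rw [hsec, lintegral_const_mul' (F x) _ (hFne x),
                lint_inv_sq (by linarith [hx.2] : (0:ℝ) < c - x) (by linarith [hx.1])]
            · rw [indicator_of_notMem hx]
              have hsec : {t | (t, x) ∈ {p : ℝ × ℝ | p.1 ∈ Ioo 0 c ∧ p.2 ∈ Ioo (c - p.1) c}} =
                  (∅ : Set ℝ) := by
                ext t; simp only [mem_setOf_eq, mem_empty_iff_false, iff_false]
                rintro ⟨⟨ht0, htc⟩, ⟨hct, hxc⟩⟩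
                exact hx ⟨by linarith, hxc⟩
              rw [hsec]; simp
    rw [← hchain]; exact hJ₂
  -- ∫ F finite
  have hFin : (∫⁻ x in Ioo 0 c, F x) ≠ ⊤ := by
    have h2' := hL2.2
    rw [eLpNorm_eq_lintegral_rpow_enorm_toReal (by norm_num) (by norm_num)] at h2'
    simp only [enorm_eq_nnnorm] at h2'
    have h3 : (∫⁻ x in Ioo (0:ℝ) c, (‖f x‖₊ : ℝ≥0∞) ^ (2:ℝ≥0∞).toReal) ≠ ⊤ := by
      intro hcon
      rw [hcon] at h2'
      simp [ENNReal.top_rpow_of_pos] at h2'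
    rw [show (2:ℝ≥0∞).toReal = (2:ℝ) by norm_num] at h3
    have h4 : (∫⁻ x in Ioo (0:ℝ) c, F x) = ∫⁻ x in Ioo (0:ℝ) c, (‖f x‖₊ : ℝ≥0∞) ^ (2:ℝ) := by
      apply lintegral_congr; intro x
      simp only [hF_def]
      rw [← ENNReal.rpow_natCast]
      norm_num
    rw [h4]; exact h3
  -- final assembly
  have hRne : (ENNReal.ofReal c⁻¹ + ENNReal.ofReal c⁻¹) ≠ ⊤ :=
    ENNReal.add_ne_top.mpr ⟨ENNReal.ofReal_ne_top, ENNReal.ofReal_ne_top⟩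
  have hptfin : ∀ x ∈ Ioo 0 c, F x * (ENNReal.ofReal (1 / x) + ENNReal.ofReal (1 / (c - x))) =
      F x * ENNReal.ofReal (x⁻¹ - c⁻¹) + F x * ENNReal.ofReal ((c - x)⁻¹ - c⁻¹) +
      F x * (ENNReal.ofReal c⁻¹ + ENNReal.ofReal c⁻¹) := by
    intro x hx
    have e1 : ENNReal.ofReal (1 / x) = ENNReal.ofReal (x⁻¹ - c⁻¹) + ENNReal.ofReal c⁻¹ := by
      rw [← ENNReal.ofReal_add (by
          rw [sub_nonneg]
          exact inv_anti₀ hx.1 hx.2.le) (by positivity), one_div]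
      congr 1; ring
    have e2 : ENNReal.ofReal (1 / (c - x)) =
        ENNReal.ofReal ((c - x)⁻¹ - c⁻¹) + ENNReal.ofReal c⁻¹ := by
      rw [← ENNReal.ofReal_add (by
          rw [sub_nonneg]
          exact inv_anti₀ (by linarith [hx.2]) (by linarith [hx.1])) (by positivity),
        one_div]
      congr 1; ring
    rw [e1, e2]; ring
  have final : (∫⁻ x in Ioo 0 c,
      F x * (ENNReal.ofReal (1 / x) + ENNReal.ofReal (1 / (c - x)))) ≠ ⊤ := by
    rw [setLIntegral_congr_fun measurableSet_Ioo hptfin]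
    have m1 : Measurable (fun x => F x * ENNReal.ofReal (x⁻¹ - c⁻¹)) :=
      hF.mul (ENNReal.measurable_ofReal.comp ((measurable_inv).sub measurable_const))
    have m2 : Measurable (fun x => F x * ENNReal.ofReal ((c - x)⁻¹ - c⁻¹)) :=
      hF.mul (ENNReal.measurable_ofReal.comp
        (((measurable_const.sub measurable_id).inv).sub measurable_const))
    rw [lintegral_add_left (show Measurable (fun x => F x * ENNReal.ofReal (x⁻¹ - c⁻¹) +
      F x * ENNReal.ofReal ((c - x)⁻¹ - c⁻¹)) from m1.add m2), lintegral_add_left m1]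
    apply ENNReal.add_ne_top.mpr
    constructor
    · exact ENNReal.add_ne_top.mpr ⟨hE₁, hE₂⟩
    · rw [lintegral_mul_const' _ _ hRne]
      exact ENNReal.mul_ne_top hFin hRne
  exact final
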